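/- Let V be a complex vector space equipped with two commuting linear operators ∂ and ∂̄ on a graded space satisfying ∂² = ∂̄² = 0 and ∂∂̄ = -∂̄∂. Suppose the ∂∂̄-lemma holds: ker ∂ ∩ Im ∂̄ = Im(∂∂̄) = ker ∂̄ ∩ Im ∂. Let α be a fixed element with ∂̄-degree 1 satisfying ∂̄α = 0 and α ∧ α = 0 (i.e. left wedge by α squares to zero and commutes appropriately), acting as a linear operator A on V with A∂̄ = -∂̄A and A∂ = -∂A and A(Im ∂) ⊆ Im ∂. Given u₀ with ∂̄u₀ = 0 and ∂u₀ = 0 such that A u₀ ∈ Im ∂̄, there exists a sequence (u_i)_{i≥1} in Im ∂ such that ∂̄ u_{i+1} + A u_i = 0 for all i ≥ 0. -/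
import Mathlib


/-- formal Green–Lazarsfeld extension.  On a space with commuting
square-zero differentials `p` (= ∂) and `q` (= ∂̄) satisfying the ∂∂̄-lemma
`ker p ∩ Im q = Im (p∘q) = ker q ∩ Im p`, and `A` (= wedge with the closed
(0,1)-form α) with `A² = 0`, anticommuting with `p, q` and preserving `Im p`:
if `u₀` is `p`- and `q`-closed and `A u₀` is `q`-exact (extension to first order),
then one can solve the whole system `q u_{i+1} + A u_i = 0` with `u_i ∈ Im p`. -/
theorem stmt_5 {V : Type*} [AddCommGroup V] [Module ℂ V]
    (p q A : V →ₗ[ℂ] V)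
    (hp : p ∘ₗ p = 0) (hq : q ∘ₗ q = 0) (hpq : p ∘ₗ q + q ∘ₗ p = 0)
    (hlem1 : LinearMap.ker p ⊓ LinearMap.range q = LinearMap.range (p ∘ₗ q))
    (hlem2 : LinearMap.ker q ⊓ LinearMap.range p = LinearMap.range (p ∘ₗ q))
    (hA2 : A ∘ₗ A = 0)
    (hAq : A ∘ₗ q + q ∘ₗ A = 0) (hAp : A ∘ₗ p + p ∘ₗ A = 0)
    (hAim : ∀ v ∈ LinearMap.range p, A v ∈ LinearMap.range p)
    (u₀ : V) (h0q : q u₀ = 0) (h0p : p u₀ = 0)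
    (h0A : A u₀ ∈ LinearMap.range q) :
    ∃ u : ℕ → V, u 0 = u₀ ∧ (∀ i, 1 ≤ i → u i ∈ LinearMap.range p) ∧
      (∀ i, q (u (i + 1)) + A (u i) = 0) := by
  classical
  have inv0 : A u₀ ∈ LinearMap.range (p ∘ₗ q) := by
    rw [← hlem1]
    refine ⟨?_, h0A⟩
    have := congrArg (fun f : V →ₗ[ℂ] V => f u₀) hAp
    simp only [LinearMap.add_apply, LinearMap.comp_apply, LinearMap.zero_apply, h0p,
      map_zero, zero_add] at this
    exact this
  have key : ∀ v : V, A v ∈ LinearMap.range (p ∘ₗ q) →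
      ∃ w : V, (q (p w) + A v = 0) ∧ A (p w) ∈ LinearMap.range (p ∘ₗ q) := by
    rintro v ⟨w, hw⟩
    refine ⟨w, ?_, ?_⟩
    · have := congrArg (fun f : V →ₗ[ℂ] V => f w) hpq
      simp only [LinearMap.add_apply, LinearMap.comp_apply, LinearMap.zero_apply] at this
      have hw' : p (q w) = A v := hw
      rw [← hw']
      linear_combination (norm := module) this
    · rw [← hlem2]
      constructor
      · have h1 := congrArg (fun f : V →ₗ[ℂ] V => f (p w)) hAq
        simp only [LinearMap.add_apply, LinearMap.comp_apply, LinearMap.zero_apply] at h1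
        -- h1 : A (q (p w)) + q (A (p w)) = 0
        have hqpw : q (p w) = - A v := by
          have := congrArg (fun f : V →ₗ[ℂ] V => f w) hpq
          simp only [LinearMap.add_apply, LinearMap.comp_apply, LinearMap.zero_apply] at this
          have hw' : p (q w) = A v := hw
          linear_combination (norm := module) this - hw'
        rw [hqpw, map_neg] at h1
        have hAA : A (A v) = 0 := by
          have := congrArg (fun f : V →ₗ[ℂ] V => f v) hA2
          simpa using this
        rw [hAA] at h1
        simpa using h1
      · exact hAim _ ⟨w, rfl⟩
  choose f hf1 hf2 using key
  let s : ℕ → Σ' v : V, A v ∈ LinearMap.range (p ∘ₗ q) := fun n =>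
    Nat.rec ⟨u₀, inv0⟩ (fun _ t => ⟨p (f t.1 t.2), hf2 t.1 t.2⟩) n
  refine ⟨fun n => (s n).1, rfl, ?_, ?_⟩
  · intro i hi
    match i, hi with
    | (n + 1), _ => exact ⟨f (s n).1 (s n).2, rfl⟩
  · intro i
    exact hf1 (s i).1 (s i).2
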